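/- (P-statistical convergence of the r-th order generalization.) Let P be a regular power series method, a < b reals, r ≥ 1 an integer, M > 0 and 0 < α ≤ 1. For each j ∈ ℕ let (ρ_{j,k})_{k≥0} be nonnegative functions in C[a,b] and (x_{j,k})_{k≥0} points of [a,b] such that for every x ∈ [a,b] the series Σ_{k=0}^∞ ρ_{j,k}(x) converges to 1, define the positive linear operators G_j(ψ)(x) = Σ_{k=0}^∞ ρ_{j,k}(x) ψ(x_{j,k}) and the r-th order generalizations G_j^{[r]}(ψ)(x) = Σ_{k=0}^∞ ρ_{j,k}(x) · Σ_{ν=0}^r ψ^{(ν)}(x_{j,k}) (x − x_{j,k})^ν / ν!, and assume these series converge (absolutely) for each x ∈ [a,b] and define continuous functions of x. If st_P-lim_{j→∞} ‖G_j(e_i) − e_i‖ = 0 for i = 0, 1, 2, where e_i(x) = x^i, then for every ψ ∈ C^r[a,b] whose r-th derivative ψ^{(r)} belongs to Lip_M(α), we have st_P-lim_{j→∞} ‖G_j^{[r]}(ψ) − ψ‖ = 0. -/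

import Mathlib

set_option maxHeartbeats 1000000


open Filter Topology
open scoped ENNReal

/-- A power series method `P`: a sequence `(s j)` of nonnegative reals with `s 0 > 0`
whose power series `s(t) = ∑ s j * t ^ j` has radius of convergence `R`, `0 < R ≤ ∞`. -/
structure PowerSeriesMethod where
  s : ℕ → ℝ
  s_nonneg : ∀ j, 0 ≤ s j
  s0_pos : 0 < s 0
  R : ℝ≥0∞
  R_pos : 0 < R
  summable_of_lt : ∀ t : ℝ, 0 < t → ENNReal.ofReal t < R → Summable fun j => s j * t ^ j
  not_summable_of_gt : ∀ t : ℝ, R < ENNReal.ofReal t → ¬ Summable fun j => s j * t ^ j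

namespace PowerSeriesMethod

/-- The filter of `t` tending to `R` from the left (through `0 < t < R`);
if `R = ∞` this is `atTop`. -/
noncomputable def limFilter (P : PowerSeriesMethod) : Filter ℝ :=
  if P.R = ⊤ then Filter.atTop else nhdsWithin P.R.toReal (Set.Ioo 0 P.R.toReal)

/-- `s(t) = ∑ s j t ^ j`. -/
noncomputable def sum (P : PowerSeriesMethod) (t : ℝ) : ℝ := ∑' j, P.s j * t ^ j

/-- The quotient `(∑_{j ∈ E} s j t ^ j) / s(t)` whose limit as `t → R⁻` is the `P`-density. -/
noncomputable def densityFn (P : PowerSeriesMethod) (E : Set ℕ) (t : ℝ) : ℝ :=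
  (∑' j, Set.indicator E (fun j => P.s j * t ^ j) j) / P.sum t

/-- `E ⊆ ℕ` has `P`-density `d`. -/
def HasDensity (P : PowerSeriesMethod) (E : Set ℕ) (d : ℝ) : Prop :=
  Tendsto (P.densityFn E) P.limFilter (𝓝 d)

/-- The power series method `P` is regular. -/
def Regular (P : PowerSeriesMethod) : Prop :=
  ∀ j, Tendsto (fun t => P.s j * t ^ j / P.sum t) P.limFilter (𝓝 0)

/-- The sequence `x` is `P`-statistically convergent to `L`. -/
def StatTendsto (P : PowerSeriesMethod) (x : ℕ → ℝ) (L : ℝ) : Prop :=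
  ∀ ε : ℝ, 0 < ε → P.HasDensity {j | ε ≤ |x j - L|} 0

end PowerSeriesMethod

/-- The monomial `eₙ(x) = xⁿ` as an element of `C([a,b], ℝ)`. -/
noncomputable def monomial (a b : ℝ) (i : ℕ) : C(Set.Icc a b, ℝ) :=
  ⟨fun x => (x : ℝ) ^ i, by continuity⟩

/- ### Auxiliary lemmas on densities -/

namespace PowerSeriesMethod

lemma eventually_good (P : PowerSeriesMethod) :
    ∀ᶠ t in P.limFilter, 0 < t ∧ ENNReal.ofReal t < P.R := by
  rw [limFilter]
  split_ifs with h
  · filter_upwards [Filter.eventually_gt_atTop 0] with t ht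
    exact ⟨ht, h ▸ ENNReal.ofReal_lt_top⟩
  · filter_upwards [self_mem_nhdsWithin] with t ht
    refine ⟨ht.1, ?_⟩
    have : ENNReal.ofReal t < ENNReal.ofReal P.R.toReal :=
      (ENNReal.ofReal_lt_ofReal_iff_of_nonneg ht.1.le).mpr ht.2
    exact lt_of_lt_of_le this (le_of_eq (ENNReal.ofReal_toReal h))

lemma summable_good (P : PowerSeriesMethod) {t : ℝ} (h : 0 < t ∧ ENNReal.ofReal t < P.R) :
    Summable fun j => P.s j * t ^ j := P.summable_of_lt t h.1 h.2

lemma sum_pos_good (P : PowerSeriesMethod) {t : ℝ} (h : 0 < t ∧ ENNReal.ofReal t < P.R) :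
    0 < P.sum t := by
  have hs := P.summable_good h
  have h0 : P.s 0 * t ^ 0 ≤ P.sum t := by
    refine Summable.le_tsum hs 0 fun j _ => ?_
    exact mul_nonneg (P.s_nonneg j) (pow_nonneg h.1.le j)
  have : (0 : ℝ) < P.s 0 * t ^ 0 := by simpa using P.s0_pos
  linarith

lemma summable_indicator_good (P : PowerSeriesMethod) (E : Set ℕ) {t : ℝ}
    (h : 0 < t ∧ ENNReal.ofReal t < P.R) :
    Summable fun j => Set.indicator E (fun j => P.s j * t ^ j) j := by
  refine Summable.of_nonneg_of_le (fun j => ?_) (fun j => ?_) (P.summable_good h)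
  · exact Set.indicator_nonneg (fun j _ => mul_nonneg (P.s_nonneg j) (pow_nonneg h.1.le j)) j
  · exact Set.indicator_le_self' (fun j _ => mul_nonneg (P.s_nonneg j) (pow_nonneg h.1.le j)) j

lemma densityFn_nonneg_good (P : PowerSeriesMethod) (E : Set ℕ) {t : ℝ}
    (h : 0 < t ∧ ENNReal.ofReal t < P.R) : 0 ≤ P.densityFn E t := by
  refine div_nonneg (tsum_nonneg fun j => ?_) (P.sum_pos_good h).le
  exact Set.indicator_nonneg (fun j _ => mul_nonneg (P.s_nonneg j) (pow_nonneg h.1.le j)) j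

lemma densityFn_mono_good (P : PowerSeriesMethod) {E F : Set ℕ} (hEF : E ⊆ F) {t : ℝ}
    (h : 0 < t ∧ ENNReal.ofReal t < P.R) : P.densityFn E t ≤ P.densityFn F t := by
  have hnum : (∑' j, Set.indicator E (fun j => P.s j * t ^ j) j) ≤
      ∑' j, Set.indicator F (fun j => P.s j * t ^ j) j := by
    refine Summable.tsum_le_tsum (fun j => ?_) (P.summable_indicator_good E h)
      (P.summable_indicator_good F h)
    exact Set.indicator_le_indicator_of_subset hEF
      (fun j => mul_nonneg (P.s_nonneg j) (pow_nonneg h.1.le j)) j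
  exact div_le_div_of_nonneg_right hnum (P.sum_pos_good h).le

lemma densityFn_union_le_good (P : PowerSeriesMethod) (A B : Set ℕ) {t : ℝ}
    (h : 0 < t ∧ ENNReal.ofReal t < P.R) :
    P.densityFn (A ∪ B) t ≤ P.densityFn A t + P.densityFn B t := by
  have hnn : ∀ j, 0 ≤ P.s j * t ^ j := fun j => mul_nonneg (P.s_nonneg j) (pow_nonneg h.1.le j)
  have hnum : (∑' j, Set.indicator (A ∪ B) (fun j => P.s j * t ^ j) j) ≤
      (∑' j, Set.indicator A (fun j => P.s j * t ^ j) j) +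
      ∑' j, Set.indicator B (fun j => P.s j * t ^ j) j := by
    rw [← Summable.tsum_add (P.summable_indicator_good A h) (P.summable_indicator_good B h)]
    refine Summable.tsum_le_tsum (fun j => ?_) (P.summable_indicator_good (A ∪ B) h)
      ((P.summable_indicator_good A h).add (P.summable_indicator_good B h))
    by_cases hA : j ∈ A <;> by_cases hB : j ∈ B <;>
      simp [Set.indicator_apply, hA, hB, hnn j, le_add_of_nonneg_left, le_add_of_nonneg_right]
  have hpos := P.sum_pos_good h
  calc P.densityFn (A ∪ B) t
      ≤ ((∑' j, Set.indicator A (fun j => P.s j * t ^ j) j) +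
          ∑' j, Set.indicator B (fun j => P.s j * t ^ j) j) / P.sum t :=
        div_le_div_of_nonneg_right hnum hpos.le
    _ = P.densityFn A t + P.densityFn B t := add_div _ _ _

lemma hasDensity_zero_mono (P : PowerSeriesMethod) {E F : Set ℕ} (hEF : E ⊆ F)
    (hF : P.HasDensity F 0) : P.HasDensity E 0 := by
  refine tendsto_of_tendsto_of_tendsto_of_le_of_le' tendsto_const_nhds hF ?_ ?_
  · filter_upwards [P.eventually_good] with t ht using P.densityFn_nonneg_good E ht
  · filter_upwards [P.eventually_good] with t ht using P.densityFn_mono_good hEF ht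

lemma hasDensity_zero_union (P : PowerSeriesMethod) {A B : Set ℕ}
    (hA : P.HasDensity A 0) (hB : P.HasDensity B 0) : P.HasDensity (A ∪ B) 0 := by
  have hsum : Tendsto (fun t => P.densityFn A t + P.densityFn B t) P.limFilter (𝓝 0) := by
    have h := hA.add hB
    rwa [add_zero] at h
  refine tendsto_of_tendsto_of_tendsto_of_le_of_le' tendsto_const_nhds hsum ?_ ?_
  · filter_upwards [P.eventually_good] with t ht using P.densityFn_nonneg_good _ ht
  · filter_upwards [P.eventually_good] with t ht using P.densityFn_union_le_good A B ht

end PowerSeriesMethod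

/- ### Sums comparison -/

lemma abs_le_of_hasSum_of_le {f g : ℕ → ℝ} {S T : ℝ} (hf : HasSum f S) (hg : HasSum g T)
    (h : ∀ k, |f k| ≤ g k) : |S| ≤ T := by
  have hsf : Summable fun k => |f k| :=
    Summable.of_nonneg_of_le (fun k => abs_nonneg _) h hg.summable
  have h2 : ‖∑' k, f k‖ ≤ ∑' k, ‖f k‖ :=
    norm_tsum_le_tsum_norm (by simpa only [Real.norm_eq_abs] using hsf)
  rw [hf.tsum_eq, Real.norm_eq_abs] at h2
  simp only [Real.norm_eq_abs] at h2
  calc |S| ≤ ∑' k, |f k| := h2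
    _ ≤ ∑' k, g k := Summable.tsum_le_tsum h hsf hg.summable
    _ = T := hg.tsum_eq

/- ### Taylor estimate -/

lemma uIcc_abs_le {x y u : ℝ} (h : u ∈ Set.uIcc y x) : |x - u| ≤ |x - y| ∧ |u - y| ≤ |x - y| := by
  rcases le_total y x with hyx | hyx
  · rw [Set.uIcc_of_le hyx] at h
    obtain ⟨h1, h2⟩ := h
    have hxy : |x - y| = x - y := abs_of_nonneg (by linarith)
    rw [hxy]
    constructor <;> rw [abs_le] <;> constructor <;> linarith
  · rw [Set.uIcc_of_ge hyx] at h
    obtain ⟨h1, h2⟩ := h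
    have hxy : |x - y| = y - x := by
      rw [abs_of_nonpos (by linarith : x - y ≤ 0)]; ring
    rw [hxy]
    constructor <;> rw [abs_le] <;> constructor <;> linarith

lemma taylor_lip_bound {a b : ℝ} (hab : a < b) {n : ℕ} {ψ : ℝ → ℝ} {M α : ℝ}
    (hψ : ContDiffOn ℝ (n + 1) ψ (Set.Icc a b)) (hα : 0 < α) (hM : 0 ≤ M)
    (hLip : ∀ x ∈ Set.Icc a b, ∀ y ∈ Set.Icc a b,
      |iteratedDerivWithin (n + 1) ψ (Set.Icc a b) x -
        iteratedDerivWithin (n + 1) ψ (Set.Icc a b) y| ≤ M * |x - y| ^ α)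
    {x y : ℝ} (hx : x ∈ Set.Icc a b) (hy : y ∈ Set.Icc a b) :
    |ψ x - taylorWithinEval ψ (n + 1) (Set.Icc a b) y x| ≤
      ((n.factorial : ℝ)⁻¹ * |x - y| ^ n * (M * |x - y| ^ α)) * |x - y| := by
  have huniq : UniqueDiffOn ℝ (Set.Icc a b) := uniqueDiffOn_Icc hab
  set D : ℝ → ℝ := iteratedDerivWithin (n + 1) ψ (Set.Icc a b) with hD
  set F : ℝ → ℝ := fun u => taylorWithinEval ψ n (Set.Icc a b) u x +
    D y * (x - u) ^ (n + 1) / ((n + 1).factorial : ℝ) with hF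
  set g : ℝ → ℝ := fun u => ((n.factorial : ℝ)⁻¹ * (x - u) ^ n) * (D u - D y) with hg
  have hsub : Set.uIcc y x ⊆ Set.Icc a b := by
    rw [← Set.uIcc_of_le hab.le]
    exact Set.uIcc_subset_uIcc (by rwa [Set.uIcc_of_le hab.le]) (by rwa [Set.uIcc_of_le hab.le])
  have hderiv : ∀ u ∈ Set.uIcc y x, HasDerivWithinAt F (g u) (Set.uIcc y x) u := by
    intro u hu
    have hus : u ∈ Set.Icc a b := hsub hu
    have h1 : HasDerivWithinAt (fun t => taylorWithinEval ψ n (Set.Icc a b) t x)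
        (((n.factorial : ℝ)⁻¹ * (x - u) ^ n) • iteratedDerivWithin (n + 1) ψ (Set.Icc a b) u)
        (Set.Icc a b) u := by
      refine hasDerivWithinAt_taylorWithinEval huniq self_mem_nhdsWithin hus
        subset_rfl hψ.of_succ ?_
      exact hψ.differentiableOn_iteratedDerivWithin (by exact_mod_cast n.lt_succ_self) huniq u hus
    have h2 : HasDerivWithinAt (fun u => D y * (x - u) ^ (n + 1) / ((n + 1).factorial : ℝ))
        (D y * (-(n + 1 : ℝ) * (x - u) ^ n) / ((n + 1).factorial : ℝ)) (Set.uIcc y x) u :=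
      ((monomial_has_deriv_aux u x n).hasDerivWithinAt.const_mul (D y)).div_const _
    have hcomb := (h1.mono hsub).add h2
    convert hcomb using 1
    · rfl
    · rfl
    · rfl
    rw [hg, smul_eq_mul, ← hD]
    have hfac : ((n + 1).factorial : ℝ) = (n + 1 : ℝ) * (n.factorial : ℝ) := by
      push_cast [Nat.factorial_succ]; ring
    rw [hfac]
    have hn1 : (n + 1 : ℝ) ≠ 0 := by positivity
    have hnf : (n.factorial : ℝ) ≠ 0 := by positivity
    field_simp
    ring
  have hbound : ∀ u ∈ Set.uIcc y x,
      ‖g u‖ ≤ (n.factorial : ℝ)⁻¹ * |x - y| ^ n * (M * |x - y| ^ α) := by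
    intro u hu
    obtain ⟨hu1, hu2⟩ := uIcc_abs_le hu
    have hus : u ∈ Set.Icc a b := hsub hu
    have hDlip : |D u - D y| ≤ M * |u - y| ^ α := hLip u hus y hy
    have hcomp : M * |u - y| ^ α ≤ M * |x - y| ^ α := by
      have : |u - y| ^ α ≤ |x - y| ^ α := Real.rpow_le_rpow (abs_nonneg _) hu2 hα.le
      exact mul_le_mul_of_nonneg_left this hM
    have hD2 : |D u - D y| ≤ M * |x - y| ^ α := hDlip.trans hcomp
    rw [Real.norm_eq_abs, hg, abs_mul, abs_mul,
      abs_of_nonneg (by positivity : (0:ℝ) ≤ (n.factorial : ℝ)⁻¹), abs_pow]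
    have h1 : |x - u| ^ n ≤ |x - y| ^ n := pow_le_pow_left₀ (abs_nonneg _) hu1 n
    exact mul_le_mul (mul_le_mul_of_nonneg_left h1 (by positivity)) hD2 (abs_nonneg _)
      (by positivity)
  have hmvt := Convex.norm_image_sub_le_of_norm_hasDerivWithin_le hderiv hbound
    (convex_uIcc y x) Set.left_mem_uIcc Set.right_mem_uIcc
  have hFx : F x = ψ x := by
    simp [hF, sub_self, zero_pow (Nat.succ_ne_zero n)]
  have hFy : F y = taylorWithinEval ψ (n + 1) (Set.Icc a b) y x := by
    rw [hF]
    simp only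
    rw [taylorWithinEval_succ, smul_eq_mul, ← hD]
    have hn1 : ((n : ℝ) + 1) ≠ 0 := by positivity
    have hnf : (n.factorial : ℝ) ≠ 0 := by positivity
    have hfac : ((n + 1).factorial : ℝ) = ((n : ℝ) + 1) * (n.factorial : ℝ) := by
      push_cast [Nat.factorial_succ]; ring
    rw [hfac]
    field_simp
  rw [hFx, hFy] at hmvt
  simpa [Real.norm_eq_abs] using hmvt

/-- `P`-statistical convergence of the `r`-th order generalization:
`G_j(ψ)(x) = ∑ₖ ρ_{j,k}(x) ψ(x_{j,k})` are positive linear operators with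
`∑ₖ ρ_{j,k}(x) = 1`, and `G_j^{[r]}(ψ)(x) = ∑ₖ ρ_{j,k}(x) ∑_{ν ≤ r} ψ⁽ᵛ⁾(x_{j,k})(x − x_{j,k})ᵛ/ν!`
is the `r`-th order generalization.  If `st_P-lim ‖G_j(eᵢ) − eᵢ‖ = 0` for `i = 0, 1, 2`, then
for every `ψ ∈ Cʳ[a,b]` with `ψ⁽ʳ⁾ ∈ Lip_M(α)`, `st_P-lim ‖G_j^{[r]}(ψ) − ψ‖ = 0`. -/
theorem rth_order_generalization_pstat (P : PowerSeriesMethod) (hP : P.Regular)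
    (a b : ℝ) (hab : a < b) (r : ℕ) (hr : 1 ≤ r)
    (M α : ℝ) (hM : 0 < M) (hα : 0 < α) (hα1 : α ≤ 1)
    (ρ : ℕ → ℕ → C(Set.Icc a b, ℝ)) (hρ : ∀ j k x, 0 ≤ ρ j k x)
    (xs : ℕ → ℕ → Set.Icc a b)
    (hρ1 : ∀ j (x : Set.Icc a b), HasSum (fun k => ρ j k x) 1)
    (G : ℕ → C(Set.Icc a b, ℝ) → C(Set.Icc a b, ℝ))
    (hG : ∀ j (f : C(Set.Icc a b, ℝ)) (x : Set.Icc a b),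
      HasSum (fun k => ρ j k x * f (xs j k)) (G j f x))
    (hGconv : ∀ i ∈ ({0, 1, 2} : Finset ℕ),
      P.StatTendsto (fun j => ‖G j (monomial a b i) - monomial a b i‖) 0)
    (ψ : ℝ → ℝ) (hψ : ContDiffOn ℝ r ψ (Set.Icc a b))
    (hLip : ∀ x ∈ Set.Icc a b, ∀ y ∈ Set.Icc a b,
      |iteratedDerivWithin r ψ (Set.Icc a b) x - iteratedDerivWithin r ψ (Set.Icc a b) y| ≤
        M * |x - y| ^ α)
    (Gr : ℕ → C(Set.Icc a b, ℝ))
    (hGr : ∀ j (x : Set.Icc a b),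
      HasSum (fun k => ρ j k x *
          ∑ ν ∈ Finset.range (r + 1),
            iteratedDerivWithin ν ψ (Set.Icc a b) (xs j k) *
              ((x : ℝ) - (xs j k : ℝ)) ^ ν / (ν.factorial : ℝ))
        (Gr j x)) :
    P.StatTendsto
      (fun j => ‖Gr j - (⟨(Set.Icc a b).restrict ψ, hψ.continuousOn.restrict⟩ : C(Set.Icc a b, ℝ))‖)
      0 := by
  obtain ⟨n, rfl⟩ : ∃ n, r = n + 1 := ⟨r - 1, (Nat.succ_pred_eq_of_pos hr).symm⟩
  set ψc : C(Set.Icc a b, ℝ) :=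
    (⟨(Set.Icc a b).restrict ψ, hψ.continuousOn.restrict⟩ : C(Set.Icc a b, ℝ)) with hψc
  have hψcx : ∀ x : Set.Icc a b, ψc x = ψ (x : ℝ) := fun x => rfl
  set c : ℝ := max |a| |b| with hc
  have hc0 : 0 ≤ c := le_trans (abs_nonneg a) (le_max_left _ _)
  have hxc : ∀ x : Set.Icc a b, |(x : ℝ)| ≤ c := fun x => abs_le_max_abs_abs x.2.1 x.2.2
  -- The key uniform estimate
  have key : ∀ η : ℝ, 0 < η → ∃ K : ℝ, 0 < K ∧ ∀ j,
      ‖Gr j - ψc‖ ≤ η + K * (‖G j (monomial a b 0) - monomial a b 0‖ +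
        ‖G j (monomial a b 1) - monomial a b 1‖ + ‖G j (monomial a b 2) - monomial a b 2‖) := by
    intro η hη
    set C : ℝ := M / (n.factorial : ℝ) with hC
    have hC0 : 0 < C := by positivity
    set ε' : ℝ := min 1 ((η / C) ^ ((1 + α)⁻¹ : ℝ)) with hε'
    have hε'0 : 0 < ε' := lt_min one_pos (by positivity)
    have hε'1 : ε' ≤ 1 := min_le_left _ _
    set T : ℝ := max (b - a) 1 with hT
    have hT1 : (1 : ℝ) ≤ T := le_max_right _ _
    set K₀ : ℝ := C * T ^ ((n + 1 : ℕ) : ℝ) * ε' ^ (α - 1) with hK₀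
    have hK₀0 : 0 < K₀ := by positivity
    refine ⟨K₀ * (1 + c) ^ 2, by positivity, fun j => ?_⟩
    -- pointwise scalar inequality
    have scalar : ∀ t : ℝ, 0 ≤ t → t ≤ b - a →
        C * (t ^ (n + 1) * t ^ α) ≤ η + K₀ * t ^ 2 := by
      intro t ht htb
      rcases le_or_gt t ε' with hcase | hcase
      · have hmain : C * (t ^ (n + 1) * t ^ α) ≤ η := by
          rcases eq_or_lt_of_le ht with h0 | h0
          · rw [← h0, Real.zero_rpow hα.ne']
            simp [hη.le]
          · have ht1 : t ≤ 1 := hcase.trans hε'1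
            have h7 : t ^ (n + 1) * t ^ α ≤ η / C := by
              calc t ^ (n + 1) * t ^ α ≤ t * t ^ α :=
                    mul_le_mul_of_nonneg_right
                      (pow_le_of_le_one ht ht1 (Nat.succ_ne_zero n))
                      (Real.rpow_nonneg ht α)
                _ = t ^ (1 + α) := by rw [Real.rpow_add h0, Real.rpow_one]
                _ ≤ ε' ^ (1 + α) := Real.rpow_le_rpow ht hcase (by linarith)
                _ ≤ ((η / C) ^ ((1 + α)⁻¹ : ℝ)) ^ (1 + α) :=
                    Real.rpow_le_rpow hε'0.le (min_le_right _ _) (by linarith)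
                _ = η / C := by
                    rw [← Real.rpow_mul (by positivity : (0:ℝ) ≤ η / C),
                      inv_mul_cancel₀ (by positivity : (1 + α) ≠ 0), Real.rpow_one]
            calc C * (t ^ (n + 1) * t ^ α) ≤ C * (η / C) :=
                  mul_le_mul_of_nonneg_left h7 hC0.le
              _ = η := by field_simp
        nlinarith [sq_nonneg t, hK₀0]
      · have ht0 : 0 < t := hε'0.trans hcase
        have hmain : C * (t ^ (n + 1) * t ^ α) ≤ K₀ * t ^ 2 := by
          have e1 : t ^ (n + 1) * t ^ α = t ^ ((n : ℝ)) * t ^ (α - 1) * t ^ (2 : ℝ) := by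
            rw [← Real.rpow_natCast t (n + 1), ← Real.rpow_add ht0, ← Real.rpow_add ht0,
              ← Real.rpow_add ht0]
            congr 1
            push_cast
            ring
          have e2 : t ^ (2 : ℝ) = t ^ 2 := Real.rpow_two t
          have htT : t ≤ T := htb.trans (le_max_left _ _)
          have b1 : t ^ ((n : ℝ)) ≤ T ^ ((n + 1 : ℕ) : ℝ) := by
            calc t ^ ((n : ℝ)) ≤ T ^ ((n : ℝ)) :=
                  Real.rpow_le_rpow ht0.le htT (Nat.cast_nonneg n)
              _ ≤ T ^ ((n + 1 : ℕ) : ℝ) :=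
                  Real.rpow_le_rpow_of_exponent_le hT1 (by push_cast; linarith)
          have b2 : t ^ (α - 1) ≤ ε' ^ (α - 1) :=
            Real.rpow_le_rpow_of_nonpos hε'0 hcase.le (by linarith)
          rw [e1, e2, hK₀]
          have hb2' : 0 ≤ t ^ (α - 1) := Real.rpow_nonneg ht0.le _
          have hprod : t ^ ((n : ℝ)) * t ^ (α - 1) ≤
              T ^ ((n + 1 : ℕ) : ℝ) * ε' ^ (α - 1) :=
            mul_le_mul b1 b2 hb2' (Real.rpow_nonneg (by linarith : (0:ℝ) ≤ T) _)
          calc C * (t ^ ((n : ℝ)) * t ^ (α - 1) * t ^ 2)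
              = (t ^ ((n : ℝ)) * t ^ (α - 1)) * (C * t ^ 2) := by ring
            _ ≤ (T ^ ((n + 1 : ℕ) : ℝ) * ε' ^ (α - 1)) * (C * t ^ 2) :=
                mul_le_mul_of_nonneg_right hprod (by positivity)
            _ = C * T ^ ((n + 1 : ℕ) : ℝ) * ε' ^ (α - 1) * t ^ 2 := by ring
        nlinarith [hη]
    -- Taylor estimate on each term
    have hTb : ∀ (x : Set.Icc a b) (k : ℕ),
        |(∑ ν ∈ Finset.range (n + 1 + 1),
            iteratedDerivWithin ν ψ (Set.Icc a b) (xs j k) *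
              ((x : ℝ) - (xs j k : ℝ)) ^ ν / (ν.factorial : ℝ)) - ψ (x : ℝ)| ≤
          η + K₀ * ((x : ℝ) - (xs j k : ℝ)) ^ 2 := by
      intro x k
      have hxm : (x : ℝ) ∈ Set.Icc a b := x.2
      have hym : ((xs j k : ℝ)) ∈ Set.Icc a b := (xs j k).2
      have hid : (∑ ν ∈ Finset.range (n + 1 + 1),
          iteratedDerivWithin ν ψ (Set.Icc a b) (xs j k) *
            ((x : ℝ) - (xs j k : ℝ)) ^ ν / (ν.factorial : ℝ)) =
          taylorWithinEval ψ (n + 1) (Set.Icc a b) (xs j k) (x : ℝ) := by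
        rw [taylor_within_apply]
        refine Finset.sum_congr rfl fun ν _ => ?_
        rw [smul_eq_mul]
        ring
      rw [hid, abs_sub_comm]
      have h1 := taylor_lip_bound hab hψ hα hM.le hLip hxm hym
      have htabs : |(x : ℝ) - (xs j k : ℝ)| ≤ b - a := by
        rw [abs_le]
        constructor
        · linarith [hxm.1, hym.2]
        · linarith [hxm.2, hym.1]
      have h2 := scalar _ (abs_nonneg ((x : ℝ) - (xs j k : ℝ))) htabs
      calc |ψ (x : ℝ) - taylorWithinEval ψ (n + 1) (Set.Icc a b) (xs j k) (x : ℝ)|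
          ≤ ((n.factorial : ℝ)⁻¹ * |(x : ℝ) - (xs j k : ℝ)| ^ n *
              (M * |(x : ℝ) - (xs j k : ℝ)| ^ α)) * |(x : ℝ) - (xs j k : ℝ)| := h1
        _ = C * (|(x : ℝ) - (xs j k : ℝ)| ^ (n + 1) * |(x : ℝ) - (xs j k : ℝ)| ^ α) := by
            rw [hC]; ring
        _ ≤ η + K₀ * |(x : ℝ) - (xs j k : ℝ)| ^ 2 := h2
        _ = η + K₀ * ((x : ℝ) - (xs j k : ℝ)) ^ 2 := by rw [sq_abs]
    -- pointwise bound on the operator difference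
    have hnorm : ∀ x : Set.Icc a b, ‖(Gr j - ψc) x‖ ≤ η + K₀ * (1 + c) ^ 2 *
        (‖G j (monomial a b 0) - monomial a b 0‖ + ‖G j (monomial a b 1) - monomial a b 1‖ +
          ‖G j (monomial a b 2) - monomial a b 2‖) := by
      intro x
      have hmon : ∀ (i : ℕ) (z : Set.Icc a b), (monomial a b i) z = (z : ℝ) ^ i :=
        fun i z => rfl
      obtain ⟨d0, hd0def⟩ : ∃ d0, ‖G j (monomial a b 0) - monomial a b 0‖ = d0 := ⟨_, rfl⟩
      obtain ⟨d1, hd1def⟩ : ∃ d1, ‖G j (monomial a b 1) - monomial a b 1‖ = d1 := ⟨_, rfl⟩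
      obtain ⟨d2, hd2def⟩ : ∃ d2, ‖G j (monomial a b 2) - monomial a b 2‖ = d2 := ⟨_, rfl⟩
      rw [hd0def, hd1def, hd2def]
      have hd0n : 0 ≤ d0 := hd0def ▸ norm_nonneg _
      have hd1n : 0 ≤ d1 := hd1def ▸ norm_nonneg _
      have hd2n : 0 ≤ d2 := hd2def ▸ norm_nonneg _
      have hs0 := hG j (monomial a b 0) x
      have hs1 := hG j (monomial a b 1) x
      have hs2 := hG j (monomial a b 2) x
      simp only [monomial, ContinuousMap.coe_mk] at hs0 hs1 hs2
      set Q : ℝ := (x : ℝ) ^ 2 * (G j (monomial a b 0) x) -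
        2 * (x : ℝ) * (G j (monomial a b 1) x) + G j (monomial a b 2) x with hQdef
      have hq : HasSum (fun k => ρ j k x * ((x : ℝ) - (xs j k : ℝ)) ^ 2) Q := by
        have h := ((hs0.mul_left ((x : ℝ) ^ 2)).sub (hs1.mul_left (2 * (x : ℝ)))).add hs2
        convert h using 1
        · rfl
        · funext k
          ring
        rfl
      have hdiff : HasSum (fun k => ρ j k x *
          ((∑ ν ∈ Finset.range (n + 1 + 1),
            iteratedDerivWithin ν ψ (Set.Icc a b) (xs j k) *
              ((x : ℝ) - (xs j k : ℝ)) ^ ν / (ν.factorial : ℝ)) - ψ (x : ℝ)))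
          (Gr j x - ψ (x : ℝ)) := by
        have h := (hGr j x).sub ((hρ1 j x).mul_right (ψ (x : ℝ)))
        rw [one_mul] at h
        convert h using 1
        · rfl
        funext k
        ring
      have hBsum : HasSum (fun k => ρ j k x * (η + K₀ * ((x : ℝ) - (xs j k : ℝ)) ^ 2))
          (η + K₀ * Q) := by
        have h := ((hρ1 j x).mul_right η).add (hq.mul_left K₀)
        rw [one_mul] at h
        convert h using 1
        · rfl
        funext k
        ring
      have habs : |Gr j x - ψ (x : ℝ)| ≤ η + K₀ * Q := by
        refine abs_le_of_hasSum_of_le hdiff hBsum fun k => ?_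
        rw [abs_mul, abs_of_nonneg (hρ j k x)]
        exact mul_le_mul_of_nonneg_left (hTb x k) (hρ j k x)
      -- bound Q
      have hA0 : |(G j (monomial a b 0)) x - 1| ≤ d0 := by
        have h := ContinuousMap.norm_coe_le_norm (G j (monomial a b 0) - monomial a b 0) x
        rw [ContinuousMap.sub_apply, Real.norm_eq_abs, hmon, hd0def] at h
        simpa using h
      have hA1 : |(G j (monomial a b 1)) x - (x : ℝ)| ≤ d1 := by
        have h := ContinuousMap.norm_coe_le_norm (G j (monomial a b 1) - monomial a b 1) x
        rw [ContinuousMap.sub_apply, Real.norm_eq_abs, hmon, hd1def] at h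
        simpa using h
      have hA2 : |(G j (monomial a b 2)) x - (x : ℝ) ^ 2| ≤ d2 := by
        have h := ContinuousMap.norm_coe_le_norm (G j (monomial a b 2) - monomial a b 2) x
        rw [ContinuousMap.sub_apply, Real.norm_eq_abs, hmon, hd2def] at h
        simpa using h
      have hQle : Q ≤ c ^ 2 * d0 + 2 * c * d1 + d2 := by
        have hx2 : (x : ℝ) ^ 2 ≤ c ^ 2 := by nlinarith [hxc x, abs_nonneg (x : ℝ), sq_abs (x : ℝ)]
        have e : Q = (x : ℝ) ^ 2 * ((G j (monomial a b 0)) x - 1) -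
            2 * (x : ℝ) * ((G j (monomial a b 1)) x - (x : ℝ)) +
            ((G j (monomial a b 2)) x - (x : ℝ) ^ 2) := by rw [hQdef]; ring
        rw [e]
        have t0 : (x : ℝ) ^ 2 * ((G j (monomial a b 0)) x - 1) ≤ c ^ 2 * d0 := by
          calc (x : ℝ) ^ 2 * ((G j (monomial a b 0)) x - 1)
              ≤ |(x : ℝ) ^ 2 * ((G j (monomial a b 0)) x - 1)| := le_abs_self _
            _ = (x : ℝ) ^ 2 * |(G j (monomial a b 0)) x - 1| := by
                rw [abs_mul, abs_of_nonneg (sq_nonneg (x : ℝ))]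
            _ ≤ c ^ 2 * d0 := mul_le_mul hx2 hA0 (abs_nonneg _) (by positivity)
        have t1 : -(2 * (x : ℝ) * ((G j (monomial a b 1)) x - (x : ℝ))) ≤ 2 * c * d1 := by
          calc -(2 * (x : ℝ) * ((G j (monomial a b 1)) x - (x : ℝ)))
              ≤ |2 * (x : ℝ) * ((G j (monomial a b 1)) x - (x : ℝ))| := neg_le_abs _
            _ = 2 * |(x : ℝ)| * |(G j (monomial a b 1)) x - (x : ℝ)| := by
                rw [abs_mul, abs_mul]
                norm_num
            _ ≤ 2 * c * d1 := by
                have hm := mul_le_mul (hxc x) hA1 (abs_nonneg _) hc0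
                nlinarith [hm]
        have t2 : (G j (monomial a b 2)) x - (x : ℝ) ^ 2 ≤ d2 := (le_abs_self _).trans hA2
        linarith [t0, t1, t2]
      have hQK : K₀ * Q ≤ K₀ * (1 + c) ^ 2 * (d0 + d1 + d2) := by
        have h1 : Q ≤ (1 + c) ^ 2 * (d0 + d1 + d2) := by
          nlinarith [hQle, hc0, hd0n, hd1n, hd2n, mul_nonneg hc0 hd0n, mul_nonneg hc0 hd1n,
            mul_nonneg hc0 hd2n, mul_nonneg (pow_nonneg hc0 2) hd1n,
            mul_nonneg (pow_nonneg hc0 2) hd2n]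
        nlinarith [hK₀0, h1]
      have : ‖(Gr j - ψc) x‖ = |Gr j x - ψ (x : ℝ)| := by
        simp [ContinuousMap.sub_apply, Real.norm_eq_abs, hψcx]
      rw [this]
      linarith [habs]
    refine (ContinuousMap.norm_le _ (by positivity)).mpr hnorm
  -- conclude P-statistical convergence
  intro ε hε
  obtain ⟨K, hK0, hkey⟩ := key (ε / 2) (by linarith)
  set θ : ℝ := ε / (6 * K) with hθ
  have hθ0 : 0 < θ := by positivity
  have h0 := hGconv 0 (by simp) θ hθ0
  have h1 := hGconv 1 (by simp) θ hθ0
  have h2 := hGconv 2 (by simp) θ hθ0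
  have hunion := P.hasDensity_zero_union (P.hasDensity_zero_union h0 h1) h2
  refine P.hasDensity_zero_mono ?_ hunion
  intro j hj
  simp only [Set.mem_setOf_eq, sub_zero] at hj
  simp only [Set.mem_union, Set.mem_setOf_eq, sub_zero]
  by_contra hcon
  push_neg at hcon
  obtain ⟨⟨hc0', hc1⟩, hc2⟩ := hcon
  have hd0 : ‖G j (monomial a b 0) - monomial a b 0‖ < θ := lt_of_abs_lt hc0'
  have hd1 : ‖G j (monomial a b 1) - monomial a b 1‖ < θ := lt_of_abs_lt hc1
  have hd2 : ‖G j (monomial a b 2) - monomial a b 2‖ < θ := lt_of_abs_lt hc2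
  have hb := hkey j
  have hlt : ‖Gr j - ψc‖ < ε := by
    have hmul : K * (‖G j (monomial a b 0) - monomial a b 0‖ +
        ‖G j (monomial a b 1) - monomial a b 1‖ + ‖G j (monomial a b 2) - monomial a b 2‖) <
        K * (3 * θ) := by
      apply mul_lt_mul_of_pos_left _ hK0
      linarith
    have h3θ : K * (3 * θ) = ε / 2 := by
      rw [hθ]
      field_simp
      ring
    linarith
  rw [abs_of_nonneg (norm_nonneg _)] at hj
  exact absurd hj (not_le.mpr hlt)
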